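/- Let R be a free ideal ring (every left ideal is free of unique rank), self-injective, let 𝒜 = {R}, and let N be a submodule of an R-module M. If c_𝒜(N) = N and N ≠ M, then M/N has a direct summand which is a free R-module of positive rank. -/

import Mathlib

/-- The 𝒜-regular closure of a submodule `N` of `M`. -/
def regClosure {R : Type} [Ring R] {M : Type} [AddCommGroup M] [Module R M]
    (𝒜 : Set (ModuleCat R)) (N : Submodule R M) : Submodule R M :=
  sInf { p | ∃ A ∈ 𝒜, ∃ g : M →ₗ[R] A, N ≤ LinearMap.ker g ∧ p = LinearMap.ker g }

theorem stmt_15 {R : Type} [Ring R]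
    (hfir : ∀ I : Submodule R R, Module.Free R ↥I)
    (hrank : ∀ (I : Submodule R R) (κ κ' : Type) (_ : Module.Basis κ R ↥I) (_ : Module.Basis κ' R ↥I),
      Nonempty (κ ≃ κ'))
    (hinjR : Module.Injective R R)
    {M : Type} [AddCommGroup M] [Module R M] (N : Submodule R M)
    (hc : regClosure {ModuleCat.of R R} N = N) (hne : N ≠ ⊤) :
    ∃ P Q : Submodule R (M ⧸ N), IsCompl P Q ∧ Module.Free R ↥P ∧ P ≠ ⊥ := by
  -- there is a nonzero linear map to R killing N
  have h1 : ∃ p ∈ { p | ∃ A ∈ ({ModuleCat.of R R} : Set (ModuleCat R)),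
      ∃ g : M →ₗ[R] A, N ≤ LinearMap.ker g ∧ p = LinearMap.ker g }, p ≠ ⊤ := by
    by_contra h
    push_neg at h
    have : regClosure {ModuleCat.of R R} N = ⊤ := by
      unfold regClosure
      exact sInf_eq_top.2 h
    exact hne (hc ▸ this)
  obtain ⟨p, ⟨A, hA, g0, hker, rfl⟩, hpt⟩ := h1
  rw [Set.mem_singleton_iff] at hA
  subst hA
  set g : M →ₗ[R] R := g0 with hg
  -- descend to the quotient
  let gq : M ⧸ N →ₗ[R] R := N.liftQ g hker
  -- corestrict to the range, which is a free module
  let I : Submodule R R := LinearMap.range gq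
  haveI : Module.Free R ↥I := hfir I
  haveI : Module.Projective R ↥I := Module.Projective.of_free
  let f : (M ⧸ N) →ₗ[R] ↥I := gq.rangeRestrict
  have hfsurj : Function.Surjective f := gq.surjective_rangeRestrict
  obtain ⟨s, hs⟩ := Module.projective_lifting_property f LinearMap.id hfsurj
  have hsec : ∀ y : ↥I, f (s y) = y := fun y => congrFun (congrArg DFunLike.coe hs) y
  -- P is the image of the section
  have hmem : ∀ x : M ⧸ N, s (f x) ∈ LinearMap.range s := fun x => ⟨f x, rfl⟩
  let π : (M ⧸ N) →ₗ[R] ↥(LinearMap.range s) :=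
    LinearMap.codRestrict _ (s.comp f) hmem
  refine ⟨LinearMap.range s, LinearMap.ker π, ?_, ?_, ?_⟩
  · have hπ : ∀ x : ↥(LinearMap.range s), π x = x := by
      rintro ⟨x, y, rfl⟩
      apply Subtype.ext
      simp [π, hsec y]
    exact LinearMap.isCompl_of_proj hπ
  · -- freeness: range s ≃ I since s is injective
    have hsinj : Function.Injective s := by
      intro a b hab
      have : f (s a) = f (s b) := by rw [hab]
      rwa [hsec, hsec] at this
    exact Module.Free.of_equiv' (hfir I) (LinearEquiv.ofInjective s hsinj)
  · -- nontriviality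
    obtain ⟨x, hx⟩ : ∃ x, g x ≠ 0 := by
      by_contra h
      push_neg at h
      exact hpt (LinearMap.ker_eq_top.2 (LinearMap.ext h))
    have hfx : f (Submodule.Quotient.mk x) ≠ 0 := by
      intro h0
      apply hx
      have : gq (Submodule.Quotient.mk x) = 0 := by
        have := congrArg (Subtype.val) h0
        simpa [f] using this
      simpa [gq, Submodule.liftQ_apply] using this
    intro hbot
    have : s (f (Submodule.Quotient.mk x)) ∈ LinearMap.range s := ⟨_, rfl⟩
    rw [hbot, Submodule.mem_bot] at this
    apply hfx
    have := congrArg f this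
    rwa [hsec, map_zero] at this
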